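/- Let v_i ∈ R^d, i = 1,...,m, and suppose 0 is in the interior of the convex hull of {v_1,...,v_m}. Then the feasible set D = {ρ : 1 + ρᵀv_i > 0 ∀i} is such that F(ρ) = -(1/m) Σ log(1 + ρᵀv_i) attains its infimum at some interior point of D (i.e., F(ρ) → ∞ cannot fail in all directions: F is coercive on D along rays approaching the boundary or escaping to infinity), hence a critical point ρ* exists. -/

import Mathlib

open Real Finset

private lemma el_sq_norm_le_sum_sq {d : ℕ} (ρ : Fin d → ℝ) : ‖ρ‖ ^ 2 ≤ ∑ j, ρ j ^ 2 := by
  have h : ‖ρ‖ ≤ Real.sqrt (∑ j, ρ j ^ 2) := by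
    rw [pi_norm_le_iff_of_nonneg (Real.sqrt_nonneg _)]
    intro j
    rw [Real.norm_eq_abs, ← Real.sqrt_sq_eq_abs]
    exact Real.sqrt_le_sqrt
      (Finset.single_le_sum (fun i _ => sq_nonneg (ρ i)) (Finset.mem_univ j))
  calc ‖ρ‖ ^ 2 ≤ Real.sqrt (∑ j, ρ j ^ 2) ^ 2 := by
        exact pow_le_pow_left₀ (norm_nonneg _) h 2
    _ = ∑ j, ρ j ^ 2 := Real.sq_sqrt (Finset.sum_nonneg fun i _ => sq_nonneg _)

private lemma el_exists_dir {m d : ℕ} (v : Fin m → (Fin d → ℝ)) {ε : ℝ} (hε : 0 < ε)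
    (hball : Metric.ball (0 : Fin d → ℝ) ε ⊆ convexHull ℝ (Set.range v))
    (ρ : Fin d → ℝ) (hρ : ρ ≠ 0) :
    ∃ i, ∑ j, ρ j * v i j ≤ -(ε / 2) * ‖ρ‖ := by
  by_contra hcon
  push_neg at hcon
  have hρpos : (0 : ℝ) < ‖ρ‖ := norm_pos_iff.mpr hρ
  have hlin : IsLinearMap ℝ (fun x : Fin d → ℝ => ∑ j, ρ j * x j) := by
    constructor
    · intro x y; simp [mul_add, Finset.sum_add_distrib]
    · intro c x; simp [Finset.mul_sum, mul_left_comm]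
  have hsub : convexHull ℝ (Set.range v) ⊆ {x | -(ε / 2) * ‖ρ‖ < ∑ j, ρ j * x j} := by
    apply convexHull_min
    · rintro _ ⟨i, rfl⟩; exact hcon i
    · exact convex_halfSpace_gt hlin _
  set c : ℝ := -(ε / 2) / ‖ρ‖ with hc
  have hcneg : c ≤ 0 := by
    apply div_nonpos_of_nonpos_of_nonneg <;> [linarith; exact hρpos.le]
  have hnorm : ‖c • ρ‖ = ε / 2 := by
    rw [norm_smul, Real.norm_eq_abs, hc, abs_div, abs_neg, abs_of_pos (by linarith : (0:ℝ) < ε / 2),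
      abs_of_pos hρpos, div_mul_cancel₀ _ (ne_of_gt hρpos)]
  have hw : (c • ρ) ∈ Metric.ball (0 : Fin d → ℝ) ε := by
    rw [Metric.mem_ball, dist_zero_right, hnorm]; linarith
  have h1 := hsub (hball hw)
  simp only [Set.mem_setOf_eq, Pi.smul_apply, smul_eq_mul] at h1
  have h2 : ∑ j, ρ j * (c * ρ j) = c * ∑ j, ρ j ^ 2 := by
    rw [Finset.mul_sum]; exact Finset.sum_congr rfl fun j _ => by ring
  have h3 : c * ∑ j, ρ j ^ 2 ≤ c * ‖ρ‖ ^ 2 :=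
    mul_le_mul_of_nonpos_left (el_sq_norm_le_sum_sq ρ) hcneg
  have h4 : c * ‖ρ‖ ^ 2 = -(ε / 2) * ‖ρ‖ := by
    rw [hc]; field_simp
  rw [h2] at h1
  linarith

/-- Existence of the EL minimizer: if `0` lies in the interior of the convex
hull of `{v_1,…,v_m}`, then `F(ρ) = -(1/m) Σ log(1 + ρᵀ v_i)` attains its
infimum on `D = {ρ : 1 + ρᵀ v_i > 0 ∀ i}` at an interior point, which is a
critical point. -/
theorem el_minimizer_exists (m d : ℕ) (v : Fin m → (Fin d → ℝ))
    (hhull : (0 : Fin d → ℝ) ∈ interior (convexHull ℝ (Set.range v)))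
    (D : Set (Fin d → ℝ))
    (hD : D = {ρ | ∀ i, 0 < 1 + ∑ j, ρ j * v i j})
    (F : (Fin d → ℝ) → ℝ)
    (hF : F = fun ρ => -(1 / (m : ℝ)) * ∑ i, Real.log (1 + ∑ j, ρ j * v i j)) :
    ∃ ρs ∈ D, IsMinOn F D ρs ∧
      HasFDerivAt F (0 : (Fin d → ℝ) →L[ℝ] ℝ) ρs := by
  -- m is positive
  have hm : 0 < m := by
    rcases Nat.eq_zero_or_pos m with h | h
    · subst h
      rw [Set.range_eq_empty, convexHull_empty, interior_empty] at hhull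
      exact absurd hhull (Set.notMem_empty _)
    · exact h
  have hmR : (0 : ℝ) < (m : ℝ) := by exact_mod_cast hm
  -- a ball around 0 inside the hull
  obtain ⟨ε, hε, hball'⟩ := Metric.isOpen_iff.mp isOpen_interior 0 hhull
  have hball : Metric.ball (0 : Fin d → ℝ) ε ⊆ convexHull ℝ (Set.range v) :=
    hball'.trans interior_subset
  set R : ℝ := 2 / ε with hR
  have hRpos : 0 < R := by positivity
  -- D is bounded
  have hDbound : ∀ ρ ∈ D, ‖ρ‖ ≤ R := by
    intro ρ hρ
    by_contra hcon
    push_neg at hcon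
    have hρ0 : ρ ≠ 0 := by
      intro h; rw [h, norm_zero] at hcon; linarith
    obtain ⟨i, hi⟩ := el_exists_dir v hε hball ρ hρ0
    have hlt : -(ε / 2) * ‖ρ‖ < -1 := by
      have : (ε / 2) * R = 1 := by rw [hR]; field_simp
      nlinarith
    have := (hD ▸ hρ) i
    linarith
  -- upper bound on the terms
  set B : ℝ := ∑ i, ∑ j, |v i j| with hB
  have hBnn : 0 ≤ B := Finset.sum_nonneg fun i _ => Finset.sum_nonneg fun j _ => abs_nonneg _
  set M : ℝ := 1 + R * B with hM
  have hM1 : 1 ≤ M := by nlinarith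
  have htermle : ∀ ρ ∈ D, ∀ i, 1 + ∑ j, ρ j * v i j ≤ M := by
    intro ρ hρ i
    have h1 : ∑ j, ρ j * v i j ≤ ∑ j, R * |v i j| := by
      apply Finset.sum_le_sum
      intro j _
      calc ρ j * v i j ≤ |ρ j * v i j| := le_abs_self _
        _ = |ρ j| * |v i j| := abs_mul _ _
        _ ≤ R * |v i j| := by
            apply mul_le_mul_of_nonneg_right _ (abs_nonneg _)
            calc |ρ j| = ‖ρ j‖ := (Real.norm_eq_abs _).symm
              _ ≤ ‖ρ‖ := norm_le_pi_norm ρ j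
              _ ≤ R := hDbound ρ hρ
    have h2 : ∑ j, R * |v i j| = R * ∑ j, |v i j| := (Finset.mul_sum _ _ _).symm
    have h3 : ∑ j, |v i j| ≤ B :=
      Finset.single_le_sum (f := fun i => ∑ j, |v i j|)
        (fun i _ => Finset.sum_nonneg fun j _ => abs_nonneg _) (Finset.mem_univ i)
    nlinarith
  have hMpos : 0 < M := by linarith
  set δ : ℝ := M⁻¹ ^ m with hδ
  have hδpos : 0 < δ := by positivity
  have hδle1 : δ ≤ 1 := by
    rw [hδ]
    exact pow_le_one₀ (by positivity) (inv_le_one_of_one_le₀ hM1)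
  have hlogM : 0 ≤ Real.log M := Real.log_nonneg hM1
  -- sublevel set bound on terms
  have hsub : ∀ ρ ∈ D, F ρ ≤ 0 → ∀ i, δ ≤ 1 + ∑ j, ρ j * v i j := by
    intro ρ hρ hFρ i₀
    have hpos : ∀ i, 0 < 1 + ∑ j, ρ j * v i j := by
      intro i; exact (hD ▸ hρ) i
    have hSnn : 0 ≤ ∑ i, Real.log (1 + ∑ j, ρ j * v i j) := by
      rw [hF] at hFρ
      by_contra hneg
      push_neg at hneg
      have : 0 < -(1 / (m : ℝ)) * ∑ i, Real.log (1 + ∑ j, ρ j * v i j) := by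
        apply mul_pos_of_neg_of_neg _ hneg
        simp only [neg_neg, neg_lt, neg_zero]
        positivity
      linarith
    have hle : ∀ i, Real.log (1 + ∑ j, ρ j * v i j) ≤ Real.log M := fun i =>
      Real.log_le_log (hpos i) (htermle ρ hρ i)
    have hsplit : Real.log (1 + ∑ j, ρ j * v i₀ j)
        + ∑ i ∈ Finset.univ.erase i₀, Real.log (1 + ∑ j, ρ j * v i j)
        = ∑ i, Real.log (1 + ∑ j, ρ j * v i j) :=
      Finset.add_sum_erase _ (fun i => Real.log (1 + ∑ j, ρ j * v i j)) (Finset.mem_univ i₀)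
    have herase : ∑ i ∈ Finset.univ.erase i₀, Real.log (1 + ∑ j, ρ j * v i j)
        ≤ (m : ℝ) * Real.log M := by
      calc ∑ i ∈ Finset.univ.erase i₀, Real.log (1 + ∑ j, ρ j * v i j)
          ≤ (Finset.univ.erase i₀).card • Real.log M :=
            Finset.sum_le_card_nsmul _ _ _ fun i _ => hle i
        _ = ((Finset.univ.erase i₀).card : ℝ) * Real.log M := by
            rw [nsmul_eq_mul]
        _ ≤ (m : ℝ) * Real.log M := by
            apply mul_le_mul_of_nonneg_right _ hlogM
            have : (Finset.univ.erase i₀).card ≤ m := by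
              calc (Finset.univ.erase i₀).card ≤ (Finset.univ : Finset (Fin m)).card :=
                    Finset.card_le_card (Finset.erase_subset _ _)
                _ = m := by simp
            exact_mod_cast this
    have hlogδ : Real.log δ ≤ Real.log (1 + ∑ j, ρ j * v i₀ j) := by
      have : Real.log δ = -((m : ℝ) * Real.log M) := by
        rw [hδ, Real.log_pow, Real.log_inv]; ring
      rw [this]
      linarith
    exact (Real.log_le_log_iff hδpos (hpos i₀)).mp hlogδ
  -- the compact set K
  set K : Set (Fin d → ℝ) := {ρ | ‖ρ‖ ≤ R ∧ ∀ i, δ ≤ 1 + ∑ j, ρ j * v i j} with hK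
  have hcont : ∀ i, Continuous fun ρ : Fin d → ℝ => 1 + ∑ j, ρ j * v i j := fun i =>
    continuous_const.add (continuous_finset_sum _ fun j _ => (continuous_apply j).mul continuous_const)
  have hKD : K ⊆ D := by
    intro ρ hρ
    rw [hD]
    intro i
    exact lt_of_lt_of_le hδpos (hρ.2 i)
  have hKclosed : IsClosed K := by
    have : K = {ρ : Fin d → ℝ | ‖ρ‖ ≤ R} ∩ ⋂ i, {ρ | δ ≤ 1 + ∑ j, ρ j * v i j} := by
      ext ρ; simp [hK, Set.mem_iInter]
    rw [this]
    exact (isClosed_le (continuous_norm) continuous_const).inter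
      (isClosed_iInter fun i => isClosed_le continuous_const (hcont i))
  have hKcompact : IsCompact K :=
    (isCompact_closedBall (0 : Fin d → ℝ) R).of_isClosed_subset hKclosed
      (fun ρ hρ => by simpa [Metric.mem_closedBall, dist_zero_right] using hρ.1)
  have h0K : (0 : Fin d → ℝ) ∈ K := by
    refine ⟨by simp [hRpos.le], fun i => ?_⟩
    simp [hδle1]
  -- derivative of F on D
  have hderiv : ∀ ρ : Fin d → ℝ, (∀ i, 0 < 1 + ∑ j, ρ j * v i j) →
      HasFDerivAt F ((-(1 / (m : ℝ))) • ∑ i, (1 + ∑ j, ρ j * v i j)⁻¹ •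
        (∑ j, (v i j) • (ContinuousLinearMap.proj j : (Fin d → ℝ) →L[ℝ] ℝ))) ρ := by
    intro ρ hρ
    rw [hF]
    have h1 : ∀ i : Fin m, HasFDerivAt (fun ρ : Fin d → ℝ => 1 + ∑ j, ρ j * v i j)
        (∑ j, (v i j) • (ContinuousLinearMap.proj j : (Fin d → ℝ) →L[ℝ] ℝ)) ρ := fun i =>
      (HasFDerivAt.fun_sum (fun j _ =>
        ((ContinuousLinearMap.proj j : (Fin d → ℝ) →L[ℝ] ℝ).hasFDerivAt.mul_const (v i j)))).const_add 1
    have h2 : HasFDerivAt (fun ρ : Fin d → ℝ => ∑ i, Real.log (1 + ∑ j, ρ j * v i j))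
        (∑ i, (1 + ∑ j, ρ j * v i j)⁻¹ •
          (∑ j, (v i j) • (ContinuousLinearMap.proj j : (Fin d → ℝ) →L[ℝ] ℝ))) ρ :=
      HasFDerivAt.fun_sum fun i _ => (h1 i).log (ne_of_gt (hρ i))
    exact h2.const_mul _
  have hcontF : ContinuousOn F D := fun ρ hρ =>
    ((hderiv ρ (fun i => (hD ▸ hρ) i)).continuousAt).continuousWithinAt
  -- minimize on K
  obtain ⟨ρs, hρsK, hminK⟩ := hKcompact.exists_isMinOn ⟨0, h0K⟩ (hcontF.mono hKD)
  have hρsD : ρs ∈ D := hKD hρsK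
  have hF0 : F 0 = 0 := by rw [hF]; simp
  have hminD : IsMinOn F D ρs := by
    rw [isMinOn_iff]
    intro ρ hρ
    by_cases h : F ρ ≤ 0
    · exact isMinOn_iff.mp hminK ρ ⟨hDbound ρ hρ, hsub ρ hρ h⟩
    · push_neg at h
      calc F ρs ≤ F 0 := isMinOn_iff.mp hminK 0 h0K
        _ = 0 := hF0
        _ ≤ F ρ := h.le
  -- D is open
  have hDopen : IsOpen D := by
    rw [hD]
    have : {ρ : Fin d → ℝ | ∀ i, 0 < 1 + ∑ j, ρ j * v i j}
        = ⋂ i, {ρ | 0 < 1 + ∑ j, ρ j * v i j} := by ext ρ; simp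
    rw [this]
    exact isOpen_iInter_of_finite fun i => isOpen_lt continuous_const (hcont i)
  have hlocal : IsLocalMin F ρs := hminD.isLocalMin (hDopen.mem_nhds hρsD)
  have hd := hderiv ρs (fun i => (hD ▸ hρsD) i)
  have hzero := hlocal.hasFDerivAt_eq_zero hd
  exact ⟨ρs, hρsD, hminD, hzero ▸ hd⟩
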